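/- Let (T,Σ,μ) be a complete finite measure space with μ(T) > 0, B ⊆ ℝ^ℓ a Borel subset, and F : T ⇉ B a nonempty-valued correspondence whose graph {(t,x) : x ∈ F(t)} belongs to Σ ⊗ 𝔅(B). Then there exists a measurable function f : T → B with f(t) ∈ F(t) for all t ∈ T. -/

import Mathlib

open MeasureTheory Set Filter Topology
open scoped ENNReal


theorem exists_pullback_of_measurableSet_prod {T X : Type*} [MeasurableSpace T]
    [MeasurableSpace X] {S : Set (T × X)} (hS : MeasurableSet S) :
    ∃ (h : T → ℕ → ℕ) (S₀ : Set ((ℕ → ℕ) × X)), Measurable h ∧ MeasurableSet S₀ ∧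
      S = (fun p : T × X => (h p.1, p.2)) ⁻¹' S₀ := by
  set C : Set (Set (T × X)) := {S | ∃ (h : T → ℕ → ℕ) (S₀ : Set ((ℕ → ℕ) × X)),
      Measurable h ∧ MeasurableSet S₀ ∧ S = (fun p : T × X => (h p.1, p.2)) ⁻¹' S₀} with hC
  suffices hsuff : S ∈ C from hsuff
  have h2 : MeasurableSet[MeasurableSpace.generateFrom (Set.image2 (· ×ˢ ·)
      {s : Set T | MeasurableSet s} {t : Set X | MeasurableSet t})] S := by
    rw [generateFrom_prod]; exact hS
  refine MeasurableSpace.generateFrom_induction _ (fun s _ => s ∈ C) ?_ ?_ ?_ ?_ S h2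
  · -- rectangles
    rintro s ⟨A, hA, B, hB, rfl⟩ _
    classical
    refine ⟨fun t _ => if t ∈ A then 1 else 0, {q : ℕ → ℕ | q 0 = 1} ×ˢ B, ?_, ?_, ?_⟩
    · exact measurable_pi_lambda _ fun _ => Measurable.ite hA measurable_const measurable_const
    · exact (((measurable_pi_apply 0) (measurableSet_singleton 1)).prod hB)
    · ext ⟨t, x⟩
      by_cases ht : t ∈ A <;> simp [ht]
  · exact ⟨fun _ _ => 0, ∅, measurable_const, MeasurableSet.empty, rfl⟩
  · rintro s _ ⟨h, S₀, hh, hS₀, rfl⟩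
    exact ⟨h, S₀ᶜ, hh, hS₀.compl, rfl⟩
  · intro f _ hf
    choose h S₀ hh hS₀ hfe using hf
    set H : T → ℕ → ℕ := fun t k => h k.unpair.1 t k.unpair.2 with hH
    have hHm : Measurable H :=
      measurable_pi_lambda _ fun k => (measurable_pi_apply k.unpair.2).comp (hh k.unpair.1)
    set d : ℕ → (ℕ → ℕ) → ℕ → ℕ := fun n q m => q (Nat.pair n m) with hd
    have hdm : ∀ n, Measurable (d n) := fun n =>
      measurable_pi_lambda _ fun m => measurable_pi_apply _
    have hkey : ∀ n t, d n (H t) = h n t := by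
      intro n t; funext m; simp [hH, hd, Nat.unpair_pair]
    refine ⟨H, ⋃ n, (fun q : (ℕ → ℕ) × X => (d n q.1, q.2)) ⁻¹' S₀ n, hHm,
      MeasurableSet.iUnion fun n =>
        (((hdm n).comp measurable_fst).prodMk measurable_snd) (hS₀ n), ?_⟩
    rw [preimage_iUnion]
    refine iUnion_congr fun n => ?_
    rw [hfe n]
    ext ⟨t, x⟩
    simp [hkey]


theorem iInter_closure_image_subset (φ : (ℕ → ℕ) → ℕ → ℕ) (hφ : Continuous φ) (n : ℕ → ℕ) :
    (⋂ m, closure (φ '' {z | ∀ i < m, z i ≤ n i})) ⊆ φ '' {z | ∀ i, z i ≤ n i} := by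
  intro p hp
  have hK : IsCompact {z : ℕ → ℕ | ∀ i, z i ≤ n i} := by
    have : {z : ℕ → ℕ | ∀ i, z i ≤ n i} = Set.pi univ (fun i => Set.Iic (n i)) := by
      ext z; simp [Set.mem_pi]; rfl
    rw [this]
    exact isCompact_univ_pi fun i => (Set.finite_Iic (n i)).isCompact
  obtain ⟨U, hU⟩ := (𝓝 p).exists_antitone_basis
  have hz : ∀ m, ∃ z : ℕ → ℕ, (∀ i < m, z i ≤ n i) ∧ φ z ∈ U m := by
    intro m
    have hpm : p ∈ closure (φ '' {z | ∀ i < m, z i ≤ n i}) := mem_iInter.1 hp m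
    rw [mem_closure_iff_nhds] at hpm
    obtain ⟨q, hqU, z, hz, rfl⟩ := hpm (U m) (hU.mem m)
    exact ⟨z, hz, hqU⟩
  choose z hz1 hz2 using hz
  set y : ℕ → ℕ → ℕ := fun m i => min (z m i) (n i) with hy
  have hyK : ∀ m, y m ∈ {z : ℕ → ℕ | ∀ i, z i ≤ n i} := fun m i => min_le_right _ _
  obtain ⟨a, haK, ρ, hρ, hconv⟩ := hK.tendsto_subseq hyK
  have hza : Tendsto (fun k => z (ρ k)) atTop (𝓝 a) := by
    rw [tendsto_pi_nhds]
    intro i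
    have h1 : Tendsto (fun k => y (ρ k) i) atTop (𝓝 (a i)) :=
      (continuous_apply i).continuousAt.tendsto.comp hconv
    refine h1.congr' ?_
    filter_upwards [eventually_ge_atTop (i + 1)] with k hk
    have : ρ k ≥ i + 1 := le_trans hk (hρ.le_apply)
    simp [hy, min_eq_left (hz1 (ρ k) i this)]
  have h2 : Tendsto (fun k => φ (z (ρ k))) atTop (𝓝 (φ a)) := (hφ.tendsto a).comp hza
  have h3 : Tendsto (fun m => φ (z m)) atTop (𝓝 p) := hU.tendsto hz2
  have h4 : Tendsto (fun k => φ (z (ρ k))) atTop (𝓝 p) := h3.comp hρ.tendsto_atTop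
  exact ⟨a, haK, tendsto_nhds_unique h2 h4⟩

noncomputable def capSeq (K : (ℕ → ℕ) → ℕ → ℕ) : ℕ → ℕ
  | m => K (fun i => if _ : i < m then capSeq K i else 0) m
termination_by m => m

theorem capSeq_eq (K : (ℕ → ℕ) → ℕ → ℕ) (m : ℕ) :
    capSeq K m = K (fun i => if _ : i < m then capSeq K i else 0) m := by
  rw [capSeq]

/-- Key capacitability lemma: the preimage under a measurable map `h : T → ℕ^ℕ` of an
analytic set (range of a continuous `φ : ℕ^ℕ → ℕ^ℕ`) is measurable when the measure is
complete and finite. -/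
theorem measurableSet_preimage_range_of_complete
    {T : Type*} [MeasurableSpace T] (μ : Measure T) [IsFiniteMeasure μ]
    (hcompl : μ.IsComplete) {h : T → ℕ → ℕ} (hh : Measurable h)
    (φ : (ℕ → ℕ) → ℕ → ℕ) (hφ : Continuous φ) :
    MeasurableSet (h ⁻¹' (Set.range φ)) := by
  set A := h ⁻¹' (Set.range φ) with hA
  -- step 1: inner approximation by measurable subsets
  have step1 : ∀ ε : ℝ≥0∞, 0 < ε → ∃ M, MeasurableSet M ∧ M ⊆ A ∧ μ A ≤ μ M + ε := by
    intro ε hε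
    set val : (ℕ → ℕ) → ℕ → Set T :=
      fun p m => h ⁻¹' (φ '' {z | ∀ i < m, z i ≤ p i}) with hval
    have key : ∀ (p : ℕ → ℕ) (m : ℕ), ∃ k,
        μ (val p m) ≤ μ (val (Function.update p m k) (m + 1)) + ε * 2⁻¹ ^ (m + 1) := by
      intro p m
      have hmono : Monotone (fun k => val (Function.update p m k) (m + 1)) := by
        intro k k' hkk'
        refine preimage_mono (image_mono ?_)
        intro z hz i hi
        rcases Nat.lt_succ_iff_lt_or_eq.1 hi with hi' | rfl
        · simpa [Function.update, Nat.ne_of_lt hi'] using hz i hi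
        · simpa [Function.update] using le_trans (by simpa [Function.update] using hz i hi) hkk'
      have hun : val p m = ⋃ k, val (Function.update p m k) (m + 1) := by
        apply subset_antisymm
        · intro t ht
          obtain ⟨z, hz, hzt⟩ := ht
          refine mem_iUnion.2 ⟨z m, z, fun i hi => ?_, hzt⟩
          rcases Nat.lt_succ_iff_lt_or_eq.1 hi with hi' | rfl
          · simpa [Function.update, Nat.ne_of_lt hi'] using hz i hi'
          · simp [Function.update]
        · refine iUnion_subset fun k => preimage_mono (image_mono ?_)
          intro z hz i hi
          simpa [Function.update, Nat.ne_of_lt hi] using hz i (Nat.lt_succ_of_lt hi)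
      have hsup : μ (val p m) = ⨆ k, μ (val (Function.update p m k) (m + 1)) := by
        rw [hun]; exact hmono.measure_iUnion
      by_cases h0 : μ (val p m) = 0
      · exact ⟨0, by simp [h0]⟩
      · have hδ : (0 : ℝ≥0∞) < ε * 2⁻¹ ^ (m + 1) :=
          ENNReal.mul_pos hε.ne' (pow_ne_zero _ (by norm_num))
        have hlt : μ (val p m) - ε * 2⁻¹ ^ (m + 1) <
            ⨆ k, μ (val (Function.update p m k) (m + 1)) := by
          rw [← hsup]
          exact ENNReal.sub_lt_self (measure_ne_top μ _) h0 hδ.ne'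
        rw [lt_iSup_iff] at hlt
        obtain ⟨k, hk⟩ := hlt
        refine ⟨k, ?_⟩
        calc μ (val p m) ≤ μ (val p m) - ε * 2⁻¹ ^ (m + 1) + ε * 2⁻¹ ^ (m + 1) := le_tsub_add
        _ ≤ μ (val (Function.update p m k) (m + 1)) + ε * 2⁻¹ ^ (m + 1) :=
            add_le_add_left hk.le _
    choose K hK using key
    set n := capSeq K with hn
    -- the chosen sequence realizes the bounds
    have hstep : ∀ m, μ (val n m) ≤ μ (val n (m + 1)) + ε * 2⁻¹ ^ (m + 1) := by
      intro m
      set p : ℕ → ℕ := fun i => if _ : i < m then n i else 0 with hp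
      have e1 : val p m = val n m := by
        have hset : {z : ℕ → ℕ | ∀ i < m, z i ≤ p i} = {z | ∀ i < m, z i ≤ n i} := by
          ext z
          refine forall_congr' fun i => imp_congr_right fun hi => ?_
          simp [hp, hi]
        simp only [hval]
        rw [hset]
      have e2 : val (Function.update p m (K p m)) (m + 1) = val n (m + 1) := by
        have hKn : K p m = n m := by rw [hn, capSeq_eq]
        have hset : {z : ℕ → ℕ | ∀ i < m + 1, z i ≤ Function.update p m (K p m) i}
            = {z | ∀ i < m + 1, z i ≤ n i} := by
          ext z
          refine forall_congr' fun i => imp_congr_right fun hi => ?_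
          rcases Nat.lt_succ_iff_lt_or_eq.1 hi with hi' | hieq
          · simp [Function.update, Nat.ne_of_lt hi', hp, hi']
          · rw [hieq]
            simp [Function.update, hKn]
        simp only [hval]
        rw [hset]
      have := hK p m
      rwa [e1, e2] at this
    have hsum : ∀ m, μ A ≤ μ (val n m) + ∑ i ∈ Finset.range m, ε * 2⁻¹ ^ (i + 1) := by
      intro m
      induction m with
      | zero =>
        have : val n 0 = A := by
          simp only [hval, hA]
          have : {z : ℕ → ℕ | ∀ i < 0, z i ≤ n i} = univ := by
            ext z; simp
          rw [this, image_univ]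
        simp [this]
      | succ m ih =>
        calc μ A ≤ μ (val n m) + ∑ i ∈ Finset.range m, ε * 2⁻¹ ^ (i + 1) := ih
        _ ≤ (μ (val n (m + 1)) + ε * 2⁻¹ ^ (m + 1)) + ∑ i ∈ Finset.range m, ε * 2⁻¹ ^ (i + 1) :=
            add_le_add_left (hstep m) _
        _ = μ (val n (m + 1)) + ∑ i ∈ Finset.range (m + 1), ε * 2⁻¹ ^ (i + 1) := by
            rw [Finset.sum_range_succ]; ring
    have hsumle : ∀ m, (∑ i ∈ Finset.range m, ε * 2⁻¹ ^ (i + 1)) ≤ ε := by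
      intro m
      calc (∑ i ∈ Finset.range m, ε * 2⁻¹ ^ (i + 1)) ≤ ∑' i : ℕ, ε * 2⁻¹ ^ (i + 1) :=
        ENNReal.sum_le_tsum _
      _ = ε * ∑' i : ℕ, 2⁻¹ ^ (i + 1) := by rw [ENNReal.tsum_mul_left]
      _ = ε * (2⁻¹ * ∑' i : ℕ, 2⁻¹ ^ i) := by
          congr 1
          rw [← ENNReal.tsum_mul_left]
          exact tsum_congr fun i => by ring
      _ = ε * (2⁻¹ * 2) := by
          rw [ENNReal.tsum_geometric, ENNReal.one_sub_inv_two]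
          norm_num
      _ = ε := by rw [ENNReal.inv_mul_cancel (by norm_num) (by norm_num), mul_one]
    -- pass to closures
    set D : ℕ → Set T := fun m => h ⁻¹' closure (φ '' {z | ∀ i < m, z i ≤ n i}) with hD
    have hDmeas : ∀ m, MeasurableSet (D m) := fun m => hh isClosed_closure.measurableSet
    have hDanti : Antitone D := by
      intro m m' hmm'
      exact preimage_mono (closure_mono (image_mono fun z hz i hi => hz i (lt_of_lt_of_le hi hmm')))
    have hAD : ∀ m, μ A ≤ μ (D m) + ε := by
      intro m
      calc μ A ≤ μ (val n m) + ∑ i ∈ Finset.range m, ε * 2⁻¹ ^ (i + 1) := hsum m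
      _ ≤ μ (D m) + ε := add_le_add (measure_mono (preimage_mono subset_closure)) (hsumle m)
    have hiInter : μ (⋂ m, D m) = ⨅ m, μ (D m) :=
      hDanti.measure_iInter (fun m => (hDmeas m).nullMeasurableSet) ⟨0, measure_ne_top μ _⟩
    set M := h ⁻¹' (φ '' {z | ∀ i, z i ≤ n i}) with hM
    have hKcompact : IsCompact {z : ℕ → ℕ | ∀ i, z i ≤ n i} := by
      have : {z : ℕ → ℕ | ∀ i, z i ≤ n i} = Set.pi univ (fun i => Set.Iic (n i)) := by
        ext z; simp [Set.mem_pi]; rfl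
      rw [this]
      exact isCompact_univ_pi fun i => (Set.finite_Iic (n i)).isCompact
    have hMmeas : MeasurableSet M :=
      hh ((hKcompact.image hφ).isClosed.measurableSet)
    have hMA : M ⊆ A := preimage_mono (image_subset_range _ _)
    refine ⟨M, hMmeas, hMA, ?_⟩
    have h1 : (⋂ m, D m) ⊆ M := by
      rw [hD, hM, ← preimage_iInter]
      exact preimage_mono (iInter_closure_image_subset φ hφ n)
    calc μ A ≤ (⨅ m, μ (D m)) + ε := by
          rw [ENNReal.iInf_add]
          exact le_iInf fun m => hAD m
    _ = μ (⋂ m, D m) + ε := by rw [hiInter]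
    _ ≤ μ M + ε := add_le_add_left (measure_mono h1) _
  -- step 2
  have step2 : ∀ j : ℕ, ∃ M, MeasurableSet M ∧ M ⊆ A ∧ μ A ≤ μ M + ((j : ℝ≥0∞))⁻¹ :=
    fun j => step1 _ (by simp)
  choose M hM1 hM2 hM3 using step2
  set M' := ⋃ j, M j with hM'
  have hM'meas : MeasurableSet M' := MeasurableSet.iUnion hM1
  have hM'A : M' ⊆ A := iUnion_subset hM2
  have hle : μ A ≤ μ M' := by
    refine ENNReal.le_of_forall_pos_le_add fun δ hδ _ => ?_
    obtain ⟨j, hj⟩ := ENNReal.exists_inv_nat_lt (by exact_mod_cast hδ.ne' : (δ : ℝ≥0∞) ≠ 0)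
    calc μ A ≤ μ (M j) + (j : ℝ≥0∞)⁻¹ := hM3 j
    _ ≤ μ M' + δ := add_le_add (measure_mono (subset_iUnion M j)) hj.le
  -- completeness
  have hnull : μ (A \ M') = 0 := by
    have h1 : A ⊆ toMeasurable μ A := subset_toMeasurable μ A
    have h2 : μ (toMeasurable μ A \ M') = 0 := by
      rw [measure_diff (hM'A.trans h1) hM'meas.nullMeasurableSet (measure_ne_top μ _),
        measure_toMeasurable]
      exact tsub_eq_zero_of_le hle
    exact measure_mono_null (diff_subset_diff_left h1) h2
  have : A = M' ∪ (A \ M') := (union_diff_cancel hM'A).symm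
  rw [this]
  exact hM'meas.union (hcompl.out _ hnull)

/-- The cylinder of sequences extending the finite sequence `s`. -/
def cylSet (s : List ℕ) : Set (ℕ → ℕ) := {z | ∀ i, (h : i < s.length) → z i = s[i]}

noncomputable def greedyList (R : List ℕ → Set (ℕ → ℕ)) (p : ℕ → ℕ) : ℕ → List ℕ
  | 0 => []
  | m + 1 => greedyList R p m ++ [sInf {k | p ∈ R (greedyList R p m ++ [k])}]

noncomputable def greedyCoord (R : List ℕ → Set (ℕ → ℕ)) (p : ℕ → ℕ) (m : ℕ) : ℕ :=
  sInf {k | p ∈ R (greedyList R p m ++ [k])}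

theorem greedyList_succ (R : List ℕ → Set (ℕ → ℕ)) (p : ℕ → ℕ) (m : ℕ) :
    greedyList R p (m + 1) = greedyList R p m ++ [greedyCoord R p m] := rfl

theorem greedyList_length (R : List ℕ → Set (ℕ → ℕ)) (p : ℕ → ℕ) (m : ℕ) :
    (greedyList R p m).length = m := by
  induction m with
  | zero => rfl
  | succ m ih => rw [greedyList_succ, List.length_append, ih]; rfl

theorem greedyList_mem (R : List ℕ → Set (ℕ → ℕ)) (p : ℕ → ℕ)
    (hp : p ∈ R []) (hR : ∀ l, R l ⊆ ⋃ k, R (l ++ [k])) (m : ℕ) :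
    p ∈ R (greedyList R p m) := by
  induction m with
  | zero => exact hp
  | succ m ih =>
    have : p ∈ ⋃ k, R (greedyList R p m ++ [k]) := hR _ ih
    rw [mem_iUnion] at this
    have hne : {k | p ∈ R (greedyList R p m ++ [k])}.Nonempty := this
    exact Nat.sInf_mem hne

theorem greedyList_getElem (R : List ℕ → Set (ℕ → ℕ)) (p : ℕ → ℕ) (m i : ℕ)
    (h : i < (greedyList R p m).length) :
    (greedyList R p m)[i] = greedyCoord R p i := by
  induction m with
  | zero => simp [greedyList_length] at h
  | succ m ih =>
    simp only [greedyList_succ] at h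
    show (greedyList R p m ++ [greedyCoord R p m])[i] = _
    rcases Nat.lt_or_ge i (greedyList R p m).length with hi | hi
    · rw [List.getElem_append_left hi]
      exact ih hi
    · have hlen : i = (greedyList R p m).length := by
        have := List.length_append (as := greedyList R p m) (bs := [greedyCoord R p m]) ▸ h
        simp at this
        omega
      subst hlen
      simp [greedyList_length]

theorem cylSet_nil : cylSet [] = univ := by
  ext z; simp [cylSet]

theorem cylSet_subset_iUnion (l : List ℕ) : cylSet l ⊆ ⋃ k, cylSet (l ++ [k]) := by
  intro z hz
  refine mem_iUnion.2 ⟨z l.length, fun i hi => ?_⟩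
  simp only [List.length_append, List.length_singleton] at hi
  rcases Nat.lt_or_ge i l.length with hi' | hi'
  · rw [List.getElem_append_left hi']
    exact hz i hi'
  · have : i = l.length := by omega
    subst this
    simp

/-- Extension map realizing a cylinder as a range. -/
def extMap (s : List ℕ) (z : ℕ → ℕ) : ℕ → ℕ :=
  fun i => if h : i < s.length then s[i] else z (i - s.length)

theorem continuous_extMap (s : List ℕ) : Continuous (extMap s) := by
  apply continuous_pi
  intro i
  by_cases h : i < s.length
  · simpa [extMap, h] using continuous_const
  · simpa [extMap, h] using continuous_apply (i - s.length)

theorem range_extMap (s : List ℕ) : Set.range (extMap s) = cylSet s := by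
  apply subset_antisymm
  · rintro _ ⟨z, rfl⟩
    intro i hi
    simp [extMap, hi]
  · intro z hz
    refine ⟨fun j => z (j + s.length), ?_⟩
    funext i
    by_cases h : i < s.length
    · simp [extMap, h, hz i h]
    · simp only [extMap, h, dif_neg, not_false_iff]
      congr 1
      omega

/-- The greedy selection converges: if `p` is in the range of the continuous map `φ`,
then applying `φ` to the greedy sequence recovers `p`. -/
theorem greedy_spec (φ : (ℕ → ℕ) → ℕ → ℕ) (hφ : Continuous φ) (p : ℕ → ℕ)
    (hp : p ∈ Set.range φ) :
    φ (fun m => greedyCoord (fun s => φ '' cylSet s) p m) = p := by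
  set R : List ℕ → Set (ℕ → ℕ) := fun s => φ '' cylSet s with hR
  have hpR : p ∈ R [] := by rw [hR]; simpa [cylSet_nil, image_univ] using hp
  have hRsub : ∀ l, R l ⊆ ⋃ k, R (l ++ [k]) := by
    intro l
    rw [hR]
    refine (image_mono (cylSet_subset_iUnion l)).trans ?_
    rw [image_iUnion]
  set σ : ℕ → ℕ := fun m => greedyCoord R p m with hσ
  have hmem : ∀ m, p ∈ R (greedyList R p m) := greedyList_mem R p hpR hRsub
  have hz : ∀ m, ∃ z ∈ cylSet (greedyList R p m), φ z = p := fun m => hmem m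
  choose z hz1 hz2 using hz
  have hzconv : Tendsto z atTop (𝓝 σ) := by
    rw [tendsto_pi_nhds]
    intro i
    refine tendsto_const_nhds.congr' ?_
    filter_upwards [eventually_gt_atTop i] with m hm
    have hlen : i < (greedyList R p m).length := by rwa [greedyList_length]
    show greedyCoord R p i = z m i
    rw [← greedyList_getElem R p m i hlen]
    exact (hz1 m i hlen).symm
  have h1 : Tendsto (fun m => φ (z m)) atTop (𝓝 (φ σ)) := (hφ.tendsto σ).comp hzconv
  have h2 : Tendsto (fun m => φ (z m)) atTop (𝓝 p) := by
    simp only [hz2]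
    exact tendsto_const_nhds
  exact tendsto_nhds_unique h1 h2

theorem greedy_measurable {T : Type*} [MeasurableSpace T] (μ : Measure T)
    [IsFiniteMeasure μ] (hcompl : μ.IsComplete) {h : T → ℕ → ℕ} (hh : Measurable h)
    (φ : (ℕ → ℕ) → ℕ → ℕ) (hφ : Continuous φ) :
    Measurable (fun t => (fun m => greedyCoord (fun s => φ '' cylSet s) (h t) m)) := by
  set R : List ℕ → Set (ℕ → ℕ) := fun s => φ '' cylSet s with hR
  -- preimages of the approximating analytic sets are measurable
  have hW : ∀ s : List ℕ, MeasurableSet (h ⁻¹' R s) := by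
    intro s
    have : R s = Set.range (φ ∘ extMap s) := by
      rw [hR, Set.range_comp, range_extMap]
    rw [this]
    exact measurableSet_preimage_range_of_complete μ hcompl hh _
      (hφ.comp (continuous_extMap s))
  -- the sets where the greedy list takes a given value
  set E : List ℕ → Set T := fun l => {t | greedyList R (h t) l.length = l} with hE
  have hEmeas : ∀ l, MeasurableSet (E l) := by
    intro l
    induction l using List.reverseRecOn with
    | nil =>
      have : E [] = univ := by
        ext t; simp [hE, greedyList]
      rw [this]; exact MeasurableSet.univ
    | append_singleton l a ih =>
      have hdec : E (l ++ [a]) = E l ∩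
          {t | sInf {k | h t ∈ R (l ++ [k])} = a} := by
        ext t
        simp only [hE, mem_setOf_eq, mem_inter_iff, List.length_append,
          List.length_singleton]
        constructor
        · intro hgl
          have h1 : greedyList R (h t) (l.length + 1)
              = greedyList R (h t) l.length ++ [greedyCoord R (h t) l.length] :=
            greedyList_succ _ _ _
          rw [h1] at hgl
          have hlen : (greedyList R (h t) l.length).length = l.length :=
            greedyList_length _ _ _
          obtain ⟨h2, h3⟩ := List.append_inj hgl hlen
          have h4 : greedyCoord R (h t) l.length = a := by
            simpa using congrArg (fun l : List ℕ => l[0]!) h3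
          refine ⟨h2, ?_⟩
          rw [← h4, greedyCoord, h2]
        · rintro ⟨h2, h3⟩
          rw [greedyList_succ]
          rw [h2]
          congr 1
          rw [greedyCoord, h2] at *
          simp [h3]
      rw [hdec]
      refine ih.inter ?_
      -- measurability of the sInf level set
      rcases Nat.eq_zero_or_pos a with rfl | ha
      · have : {t | sInf {k | h t ∈ R (l ++ [k])} = 0}
            = (h ⁻¹' R (l ++ [0])) ∪ (⋂ k, (h ⁻¹' R (l ++ [k]))ᶜ) := by
          ext t
          simp only [mem_setOf_eq, mem_union, mem_iInter, mem_compl_iff, mem_preimage]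
          rw [Nat.sInf_eq_zero]
          constructor
          · rintro (h0 | hemp)
            · exact Or.inl h0
            · refine Or.inr fun k hk => ?_
              have : k ∈ {k | h t ∈ R (l ++ [k])} := hk
              rw [hemp] at this
              exact this
          · rintro (h0 | hall)
            · exact Or.inl h0
            · refine Or.inr (eq_empty_iff_forall_notMem.2 fun k hk => hall k hk)
        rw [this]
        exact (hW _).union (MeasurableSet.iInter fun k => (hW _).compl)
      · have : {t | sInf {k | h t ∈ R (l ++ [k])} = a}
            = (h ⁻¹' R (l ++ [a])) ∩ (⋂ b, ⋂ (_ : b < a), (h ⁻¹' R (l ++ [b]))ᶜ) := by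
          ext t
          simp only [mem_setOf_eq, mem_inter_iff, mem_iInter, mem_compl_iff, mem_preimage]
          constructor
          · intro hs
            have hne : {k | h t ∈ R (l ++ [k])}.Nonempty := by
              by_contra hc
              rw [not_nonempty_iff_eq_empty] at hc
              rw [hc, Nat.sInf_empty] at hs
              omega
            constructor
            · rw [← hs]; exact Nat.sInf_mem hne
            · intro b hb hmem
              have : sInf {k | h t ∈ R (l ++ [k])} ≤ b := Nat.sInf_le hmem
              omega
          · rintro ⟨hmem, hlt⟩
            refine le_antisymm (Nat.sInf_le hmem) ?_
            by_contra hc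
            push_neg at hc
            have h5 : sInf {k | h t ∈ R (l ++ [k])} ∈ {k | h t ∈ R (l ++ [k])} :=
              Nat.sInf_mem ⟨a, hmem⟩
            exact hlt _ hc h5
        rw [this]
        exact (hW _).inter (MeasurableSet.iInter fun b =>
          MeasurableSet.iInter fun _ => (hW _).compl)
  -- coordinatewise measurability
  refine measurable_pi_lambda _ fun m => ?_
  refine measurable_to_countable' fun k => ?_
  have : (fun t => greedyCoord R (h t) m) ⁻¹' {k}
      = ⋃ (l : List ℕ) (_ : l.length = m), (E (l ++ [k]) ∩ E l) := by
    ext t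
    simp only [mem_preimage, mem_singleton_iff, mem_iUnion, mem_inter_iff]
    constructor
    · intro hco
      refine ⟨greedyList R (h t) m, greedyList_length _ _ _, ?_, ?_⟩
      · show greedyList R (h t) (greedyList R (h t) m ++ [k]).length = _
        rw [List.length_append, greedyList_length, List.length_singleton, ← hco]
        exact greedyList_succ _ _ _
      · show greedyList R (h t) (greedyList R (h t) m).length = _
        rw [greedyList_length]
    · rintro ⟨l, hlen, h1, h2⟩
      have h2' : greedyList R (h t) m = l := by
        rw [← hlen]; exact h2
      have h1' : greedyList R (h t) (m + 1) = l ++ [k] := by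
        have : (l ++ [k]).length = m + 1 := by simp [hlen]
        rw [← this]; exact h1
      rw [greedyList_succ, h2'] at h1'
      have := List.append_inj h1' (by rw [hlen])
      simpa using congrArg (fun l : List ℕ => l[0]!) this.2
  rw [this]
  exact MeasurableSet.biUnion (Set.to_countable _)
    (fun l _ => (hEmeas _).inter (hEmeas _))


/-- Aumann–Saint-Beuve measurable selection theorem (finite-dimensional form): a
nonempty-valued correspondence into a Borel subset `B ⊆ ℝ^ℓ` with measurable graph over
a complete finite measure space admits a measurable selection. -/
theorem aumann_saint_beuve_selection {ℓ : ℕ} {T : Type*} [MeasurableSpace T]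
    (μ : Measure T) [IsFiniteMeasure μ] (hcompl : μ.IsComplete)
    (B : Set (Fin ℓ → ℝ)) (hB : MeasurableSet B)
    (F : T → Set (Fin ℓ → ℝ)) (hFB : ∀ t, F t ⊆ B) (hFne : ∀ t, (F t).Nonempty)
    (hgraph : MeasurableSet {q : T × (Fin ℓ → ℝ) | q.2 ∈ F q.1}) :
    ∃ f : T → Fin ℓ → ℝ, Measurable f ∧ ∀ t, f t ∈ F t := by
  obtain ⟨h, G₀, hh, hG₀, hGeq⟩ := exists_pullback_of_measurableSet_prod hgraph
  rcases isEmpty_or_nonempty T with hT | hT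
  · exact ⟨fun _ => 0, measurable_const, fun t => (hT.false t).elim⟩
  obtain ⟨t₀⟩ := hT
  have hG₀ne : G₀.Nonempty := by
    obtain ⟨x, hx⟩ := hFne t₀
    have hx' : (t₀, x) ∈ {q : T × (Fin ℓ → ℝ) | q.2 ∈ F q.1} := hx
    rw [hGeq] at hx'
    exact ⟨(h t₀, x), hx'⟩
  have han : MeasureTheory.AnalyticSet G₀ := hG₀.analyticSet
  rw [MeasureTheory.AnalyticSet] at han
  rcases han with hemp | ⟨ψ, hψcont, hψrange⟩
  · exact absurd hemp hG₀ne.ne_empty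
  set φ : (ℕ → ℕ) → ℕ → ℕ := fun z => (ψ z).1 with hφ'
  have hφcont : Continuous φ := continuous_fst.comp hψcont
  have hrange : ∀ t, h t ∈ Set.range φ := by
    intro t
    obtain ⟨x, hx⟩ := hFne t
    have hx' : (t, x) ∈ {q : T × (Fin ℓ → ℝ) | q.2 ∈ F q.1} := hx
    rw [hGeq] at hx'
    rw [← hψrange] at hx'
    obtain ⟨z, hz⟩ := hx'
    exact ⟨z, congrArg Prod.fst hz⟩
  set σ : T → ℕ → ℕ := fun t => (fun m => greedyCoord (fun s => φ '' cylSet s) (h t) m)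
    with hσ'
  have hσmeas : Measurable σ := greedy_measurable μ hcompl hh φ hφcont
  have hφσ : ∀ t, φ (σ t) = h t := fun t => greedy_spec φ hφcont (h t) (hrange t)
  refine ⟨fun t => (ψ (σ t)).2, ((continuous_snd.comp hψcont).measurable).comp hσmeas,
    fun t => ?_⟩
  have h1 : ψ (σ t) ∈ G₀ := by rw [← hψrange]; exact Set.mem_range_self _
  have h2 : ψ (σ t) = (h t, (ψ (σ t)).2) := by
    have : (ψ (σ t)).1 = h t := hφσ t
    rw [← this]
  have h3 : (t, (ψ (σ t)).2) ∈ {q : T × (Fin ℓ → ℝ) | q.2 ∈ F q.1} := by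
    rw [hGeq]
    show (h t, (ψ (σ t)).2) ∈ G₀
    rw [← h2]
    exact h1
  exact h3
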